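/- In the two-state, two-signal setting: let μ ∈ (0,1) be the prior probability of state 1, with Bayesian posteriors x_0 < μ < x_1 satisfying p x_1 + (1−p) x_0 = μ for p ∈ (0,1). If a distorted posterior x̂_0 does not lie in [x_0, μ], then either x̂_0 ∉ [x_0, x_1] (so it can be strictly separated from [x_0, x_1]) or x̂_0 ∈ (μ, x_1], and in either case there exists an affine function f on [0,1] with f(x̂_0) > 0 and p f(x_1)·[f(x̂_1)≥0] + (1−p) f(x_0) < 0 for x̂_1 = x_1, so the agent can be exploited by a single-action decision problem. -/
import Mathlib


/-- Proposition 1, key direction (two states, binary signal): if the distorted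
posterior `xh0` fails to lie on the segment `[x0, μ]` (failure of
underreaction), then either it leaves `[x0, x1]` or it skips over the prior into
`(μ, x1]`, and in either case there is a single-action decision problem, with
affine payoff `f(z) = α z − β`, with `f(xh0) > 0` and strictly negative ex ante
expected payoff (taking `xh1 = x1`, the agent accepts at realization `1` iff
`f(x1) ≥ 0`). -/
theorem binary_failure_of_underreaction_exploits
    (μ p x0 x1 xh0 : ℝ)
    (hμ : μ ∈ Set.Ioo (0 : ℝ) 1) (hp : p ∈ Set.Ioo (0 : ℝ) 1)
    (hx0 : 0 ≤ x0) (hx1 : x1 ≤ 1)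
    (h0 : x0 < μ) (h1 : μ < x1)
    (hbayes : p * x1 + (1 - p) * x0 = μ)
    (hxh0mem : xh0 ∈ Set.Icc (0 : ℝ) 1)
    (hfail : xh0 ∉ Set.Icc x0 μ) :
    (xh0 ∉ Set.Icc x0 x1 ∨ xh0 ∈ Set.Ioc μ x1) ∧
    ∃ α β : ℝ, 0 < α * xh0 - β ∧
      p * (if 0 ≤ α * x1 - β then α * x1 - β else 0)
        + (1 - p) * (α * x0 - β) < 0 := by
  simp only [Set.mem_Icc, not_and_or, not_le] at hfail
  obtain ⟨hp0, hp1⟩ := hp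
  rcases hfail with h | h
  · refine ⟨Or.inl (by simp only [Set.mem_Icc, not_and_or, not_le]; exact Or.inl h),
      -1, -((xh0 + x0) / 2), by linarith, ?_⟩
    rw [if_neg (by linarith)]
    nlinarith
  · rcases le_or_gt xh0 x1 with hle | hgt
    · refine ⟨Or.inr ⟨h, hle⟩, 1, (μ + xh0) / 2, by linarith, ?_⟩
      rw [if_pos (by linarith)]
      nlinarith
    · refine ⟨Or.inl (by simp only [Set.mem_Icc, not_and_or, not_le]; exact Or.inr hgt),
        1, (xh0 + x1) / 2, by linarith, ?_⟩
      rw [if_neg (by linarith)]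
      nlinarith
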